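/- 𝒵 + 𝒥 is a two-sided inverse of 𝔗 + 𝒥 − D⁻¹ + I; that is, (𝔗 + 𝒥 − D⁻¹ + I)(𝒵 + 𝒥) = I and (𝒵 + 𝒥)(𝔗 + 𝒥 − D⁻¹ + I) = I. -/

import Mathlib

open Matrix Finset Filter Topology

/-- The all-ones n×n matrix `J = e eᵀ`. -/
noncomputable def Jmat (n : ℕ) : Matrix (Fin n) (Fin n) ℝ :=
  Matrix.of fun _ _ => (1 : ℝ)

/-- `Π^{1/2}`: the diagonal matrix with entries `√(π_i)`. -/
noncomputable def Pih (n : ℕ) (pv : Fin n → ℝ) : Matrix (Fin n) (Fin n) ℝ :=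
  Matrix.diagonal fun i => Real.sqrt (pv i)

/-- `Π^{-1/2}`: the diagonal matrix with entries `1/√(π_i)`. -/
noncomputable def Pinvh (n : ℕ) (pv : Fin n → ℝ) : Matrix (Fin n) (Fin n) ℝ :=
  Matrix.diagonal fun i => (Real.sqrt (pv i))⁻¹

lemma Pih_mul_Pinvh {n : ℕ} (pv : Fin n → ℝ) (hpv_pos : ∀ i, 0 < pv i) :
    Pih n pv * Pinvh n pv = 1 := by
  simp only [Pih, Pinvh, Matrix.diagonal_mul_diagonal]
  have : (fun i => Real.sqrt (pv i) * (Real.sqrt (pv i))⁻¹) = fun _ : Fin n => (1 : ℝ) :=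
    funext fun i => mul_inv_cancel₀ (Real.sqrt_ne_zero'.2 (hpv_pos i))
  rw [this, Matrix.diagonal_one]

lemma Pinvh_mul_Pih {n : ℕ} (pv : Fin n → ℝ) (hpv_pos : ∀ i, 0 < pv i) :
    Pinvh n pv * Pih n pv = 1 := by
  simp only [Pih, Pinvh, Matrix.diagonal_mul_diagonal]
  have : (fun i => (Real.sqrt (pv i))⁻¹ * Real.sqrt (pv i)) = fun _ : Fin n => (1 : ℝ) :=
    funext fun i => inv_mul_cancel₀ (Real.sqrt_ne_zero'.2 (hpv_pos i))
  rw [this, Matrix.diagonal_one]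

lemma Jdiag_mul_Pinvh {n : ℕ} (pv : Fin n → ℝ) (hpv_pos : ∀ i, 0 < pv i) :
    Jmat n * Matrix.diagonal pv * Pinvh n pv = Jmat n * Pih n pv := by
  ext i j
  simp only [Pih, Pinvh, Jmat, Matrix.mul_diagonal, Matrix.of_apply, one_mul]
  rw [← Real.sqrt_mul_self (hpv_pos j).le]
  field_simp
  rw [Real.sqrt_sq (hpv_pos j).le, div_eq_iff (Real.sqrt_ne_zero'.2 (hpv_pos j)), Real.mul_self_sqrt (hpv_pos j).le]

lemma Pih_Dinv_Pinvh {n : ℕ} (pv : Fin n → ℝ) (hpv_pos : ∀ i, 0 < pv i)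
    (d : Fin n → ℝ) : Pih n pv * (Matrix.diagonal d)⁻¹ * Pinvh n pv = (Matrix.diagonal d)⁻¹ := by
  rw [Matrix.inv_diagonal]
  simp only [Pih, Pinvh, Matrix.diagonal_mul_diagonal]
  have : (fun i => Real.sqrt (pv i) * Ring.inverse d i * (Real.sqrt (pv i))⁻¹)
      = Ring.inverse d := by
    funext i
    have h : Real.sqrt (pv i) ≠ 0 := Real.sqrt_ne_zero'.2 (hpv_pos i)
    field_simp
  rw [this]

/-- `𝒵 + 𝒥` is a two-sided inverse of `𝔗 + 𝒥 − D⁻¹ + I`. -/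
theorem Zc_add_Jc_two_sided_inverse {n : ℕ} (hn : 1 ≤ n)
    (P : Matrix (Fin n) (Fin n) ℝ)
    (hP_nonneg : ∀ i j, 0 ≤ P i j) (hP_row : ∀ i, ∑ j, P i j = 1)
    (pv : Fin n → ℝ) (hpv_pos : ∀ i, 0 < pv i) (hpv_sum : ∑ i, pv i = 1)
    (hpv_stat : Matrix.vecMul pv P = pv)
    (hM : IsUnit (1 - P + Jmat n * Matrix.diagonal pv))
    (d : Fin n → ℝ) (hd_pos : ∀ i, 0 < d i) :
    let Z := (1 - P + Jmat n * Matrix.diagonal pv)⁻¹ - Jmat n * Matrix.diagonal pv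
    let Dinv := (Matrix.diagonal d)⁻¹
    let T := Pih n pv * (Dinv - P) * Pinvh n pv
    let Zc := Pih n pv * Z * Pinvh n pv
    let Jc := Pih n pv * Jmat n * Pih n pv
    (T + Jc - Dinv + 1) * (Zc + Jc) = 1 ∧ (Zc + Jc) * (T + Jc - Dinv + 1) = 1 := by
  intro Z Dinv T Zc Jc
  set M : Matrix (Fin n) (Fin n) ℝ := 1 - P + Jmat n * Matrix.diagonal pv with hMdef
  have hdet : IsUnit M.det := (Matrix.isUnit_iff_isUnit_det M).1 hM
  have h1 : Pih n pv * Pinvh n pv = 1 := Pih_mul_Pinvh pv hpv_pos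
  have h2 : Pinvh n pv * Pih n pv = 1 := Pinvh_mul_Pih pv hpv_pos
  have hJ : Jmat n * Matrix.diagonal pv * Pinvh n pv = Jmat n * Pih n pv :=
    Jdiag_mul_Pinvh pv hpv_pos
  have hA : T + Jc - Dinv + 1 = Pih n pv * M * Pinvh n pv := by
    have : Pih n pv * M * Pinvh n pv
        = Pih n pv * Pinvh n pv - Pih n pv * P * Pinvh n pv
          + Pih n pv * (Jmat n * Matrix.diagonal pv * Pinvh n pv) := by
      rw [hMdef]; noncomm_ring
    rw [this, h1, hJ]
    have hT : T = Dinv - Pih n pv * P * Pinvh n pv := by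
      show Pih n pv * (Dinv - P) * Pinvh n pv = _
      rw [Matrix.mul_sub, Matrix.sub_mul, Pih_Dinv_Pinvh pv hpv_pos d]
    rw [hT]
    show Dinv - Pih n pv * P * Pinvh n pv + Jc - Dinv + 1 = _
    rw [show Jc = Pih n pv * (Jmat n * Pih n pv) from (mul_assoc _ _ _)]
    abel
  have hB : Zc + Jc = Pih n pv * M⁻¹ * Pinvh n pv := by
    have hZc : Zc = Pih n pv * M⁻¹ * Pinvh n pv
        - Pih n pv * (Jmat n * Matrix.diagonal pv * Pinvh n pv) := by
      show Pih n pv * (M⁻¹ - Jmat n * Matrix.diagonal pv) * Pinvh n pv = _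
      rw [Matrix.mul_sub, Matrix.sub_mul]
      noncomm_ring
    rw [hZc, hJ, show Jc = Pih n pv * (Jmat n * Pih n pv) from (mul_assoc _ _ _)]
    abel
  constructor
  · rw [hA, hB]
    calc Pih n pv * M * Pinvh n pv * (Pih n pv * M⁻¹ * Pinvh n pv)
        = Pih n pv * M * (Pinvh n pv * Pih n pv) * M⁻¹ * Pinvh n pv := by
          noncomm_ring
      _ = Pih n pv * (M * M⁻¹) * Pinvh n pv := by rw [h2]; noncomm_ring
      _ = 1 := by rw [Matrix.mul_nonsing_inv M hdet, mul_one, h1]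
  · rw [hA, hB]
    calc Pih n pv * M⁻¹ * Pinvh n pv * (Pih n pv * M * Pinvh n pv)
        = Pih n pv * M⁻¹ * (Pinvh n pv * Pih n pv) * M * Pinvh n pv := by
          noncomm_ring
      _ = Pih n pv * (M⁻¹ * M) * Pinvh n pv := by rw [h2]; noncomm_ring
      _ = 1 := by rw [Matrix.nonsing_inv_mul M hdet, mul_one, h1]
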